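/- Let X_s be distributed according to the BESQ(4) transition density from x > 0 over time s > 0, i.e., X_s/s is noncentral chi-square with 4 degrees of freedom and noncentrality parameter λ = x/s. Then E[1/X_s] = (1/x)(1 − exp(−x/(2s))). -/

import Mathlib

/-- Density of a central chi-square distribution with `d` degrees of freedom:
`y^{d/2−1} e^{−y/2} / (2^{d/2} Γ(d/2))`. -/
noncomputable def centralChiSqPdf (d y : ℝ) : ℝ :=
  y ^ (d / 2 - 1) * Real.exp (-y / 2) / (2 ^ (d / 2) * Real.Gamma (d / 2))

/-- Density of a noncentral chi-square distribution with 4 degrees of freedom and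
noncentrality parameter `λ`, as a Poisson(λ/2) mixture of central chi-square
densities with `4 + 2k` degrees of freedom. -/
noncomputable def ncChiSq4Pdf (lam y : ℝ) : ℝ :=
  ∑' k : ℕ, (Real.exp (-lam / 2) * (lam / 2) ^ k / (Nat.factorial k : ℝ)) *
    centralChiSqPdf (4 + 2 * k) y


open MeasureTheory Set Real


lemma aux_integrable (k : ℕ) :
    IntegrableOn (fun y : ℝ => y ^ (k : ℝ) * Real.exp (-(1/2) * y)) (Ioi 0) := by
  have h := integrableOn_rpow_mul_exp_neg_mul_rpow (s := (k : ℝ)) (p := 1) (b := 1/2)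
    (lt_of_lt_of_le neg_one_lt_zero (Nat.cast_nonneg k)) one_pos (by norm_num)
  simpa [Real.rpow_one] using h

lemma aux_val (k : ℕ) :
    ∫ y in Ioi (0:ℝ), y ^ (k : ℝ) * Real.exp (-(1/2) * y)
      = 2 ^ ((k : ℝ) + 1) * Real.Gamma ((k : ℝ) + 1) := by
  have h := integral_rpow_mul_exp_neg_mul_Ioi (a := (k : ℝ) + 1) (r := 1/2)
    (by positivity) (by norm_num)
  rw [show ((1:ℝ)/(1/2)) = 2 by norm_num] at h
  rw [← h]
  refine setIntegral_congr_fun measurableSet_Ioi (fun y hy => ?_)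
  rw [add_sub_cancel_right]
  ring_nf

lemma ptwise (s : ℝ) (hs : 0 < s) (k : ℕ) {y : ℝ} (hy : 0 < y) :
    (1 / (s * y)) * centralChiSqPdf (4 + 2 * k) y
      = (s * 2 ^ ((k : ℝ) + 2) * Real.Gamma ((k : ℝ) + 2))⁻¹
        * (y ^ (k : ℝ) * Real.exp (-(1/2) * y)) := by
  have e1 : ((4 : ℝ) + 2 * k) / 2 - 1 = (k : ℝ) + 1 := by ring
  have e2 : ((4 : ℝ) + 2 * k) / 2 = (k : ℝ) + 2 := by ring
  have hyk : y ^ ((k : ℝ) + 1) = y ^ (k : ℝ) * y := by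
    rw [Real.rpow_add hy, Real.rpow_one]
  have hG : 0 < Real.Gamma ((k : ℝ) + 2) := Real.Gamma_pos_of_pos (by positivity)
  have h2 : (0:ℝ) < 2 ^ ((k : ℝ) + 2) := Real.rpow_pos_of_pos two_pos _
  unfold centralChiSqPdf
  rw [e1, e2, hyk]
  rw [show Real.exp (-y/2) = Real.exp (-(1/2) * y) by ring_nf]
  field_simp

lemma aux_term (s : ℝ) (hs : 0 < s) (k : ℕ) :
    IntegrableOn (fun y : ℝ => (1 / (s * y)) * centralChiSqPdf (4 + 2 * k) y) (Ioi 0)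
    ∧ ∫ y in Ioi (0:ℝ), (1 / (s * y)) * centralChiSqPdf (4 + 2 * k) y
        = 1 / (2 * s * (k + 1)) := by
  set C : ℝ := (s * 2 ^ ((k : ℝ) + 2) * Real.Gamma ((k : ℝ) + 2))⁻¹ with hC
  have hcong : EqOn (fun y : ℝ => (1 / (s * y)) * centralChiSqPdf (4 + 2 * k) y)
      (fun y : ℝ => C * (y ^ (k : ℝ) * Real.exp (-(1/2) * y))) (Ioi 0) :=
    fun y hy => ptwise s hs k (mem_Ioi.mp hy)
  have hint : IntegrableOn (fun y : ℝ => C * (y ^ (k : ℝ) * Real.exp (-(1/2) * y))) (Ioi 0) :=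
    (aux_integrable k).const_mul C
  constructor
  · exact hint.congr_fun (fun y hy => (hcong hy).symm) measurableSet_Ioi
  · rw [setIntegral_congr_fun measurableSet_Ioi hcong, integral_const_mul, aux_val k]
    have hgam1 : Real.Gamma ((k : ℝ) + 1) = (Nat.factorial k : ℝ) := Real.Gamma_nat_eq_factorial k
    have hgam2 : Real.Gamma ((k : ℝ) + 2) = (Nat.factorial (k+1) : ℝ) := by
      rw [show ((k : ℝ) + 2) = ((k+1 : ℕ) : ℝ) + 1 by push_cast; ring]
      exact Real.Gamma_nat_eq_factorial (k+1)
    have h2 : (2:ℝ) ^ ((k : ℝ) + 2) = 2 ^ ((k : ℝ) + 1) * 2 := by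
      rw [show ((k:ℝ) + 2) = ((k:ℝ) + 1) + 1 by ring, Real.rpow_add two_pos, Real.rpow_one]
    have hp : (0:ℝ) < 2 ^ ((k : ℝ) + 1) := Real.rpow_pos_of_pos two_pos _
    have hfac : (0:ℝ) < (Nat.factorial k : ℝ) := by exact_mod_cast Nat.factorial_pos k
    rw [hC, hgam1, hgam2, h2, Nat.factorial_succ]
    push_cast
    have hk1 : (0:ℝ) < (k : ℝ) + 1 := by positivity
    field_simp

/-- If `X_s` is distributed according to the BESQ(4) transition density from `x > 0`
over time `s > 0`, i.e. `X_s/s` is noncentral chi-square with 4 degrees of freedom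
and noncentrality `λ = x/s` (so `X_s = s·Y` with density `y ↦ ncChiSq4Pdf (x/s) y`
for `Y`), then `E[1/X_s] = (1/x)(1 − exp(−x/(2s)))`. -/
theorem besq4_reciprocal_expectation (s x : ℝ) (hs : 0 < s) (hx : 0 < x) :
    (∫ y in Set.Ioi (0 : ℝ), (1 / (s * y)) * ncChiSq4Pdf (x / s) y) =
      (1 / x) * (1 - Real.exp (-x / (2 * s))) := by
  set l : ℝ := x / s with hl
  have hl0 : 0 < l := div_pos hx hs
  set w : ℕ → ℝ := fun k => Real.exp (-l / 2) * (l / 2) ^ k / (Nat.factorial k : ℝ) with hw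
  have hw0 : ∀ k, 0 ≤ w k := fun k => by
    have := (Nat.factorial_pos k); positivity
  set F : ℕ → ℝ → ℝ := fun k y =>
    w k * ((1 / (s * y)) * centralChiSqPdf (4 + 2 * k) y) with hF
  have step1 : (∫ y in Ioi (0:ℝ), (1 / (s * y)) * ncChiSq4Pdf l y)
      = ∫ y in Ioi (0:ℝ), ∑' k, F k y := by
    refine setIntegral_congr_fun measurableSet_Ioi (fun y hy => ?_)
    unfold ncChiSq4Pdf
    rw [← tsum_mul_left]
    exact tsum_congr fun k => by simp only [hF]; ring
  have hterm := fun k => aux_term s hs k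
  have hFint : ∀ k, Integrable (F k) (volume.restrict (Ioi 0)) := fun k =>
    ((hterm k).1.const_mul (w k))
  have hFval : ∀ k, ∫ y in Ioi (0:ℝ), F k y = w k * (1 / (2 * s * (k + 1))) := fun k => by
    simp only [hF]
    rw [integral_const_mul, (hterm k).2]
  have hFnn : ∀ k, ∀ y ∈ Ioi (0:ℝ), 0 ≤ F k y := by
    intro k y hy
    have hy0 : 0 < y := hy
    have hc : 0 ≤ centralChiSqPdf (4 + 2 * k) y := by
      unfold centralChiSqPdf
      have hG : 0 < Real.Gamma (((4:ℝ) + 2 * k) / 2) :=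
        Real.Gamma_pos_of_pos (by positivity)
      positivity
    have := hw0 k
    positivity
  have hnormval : ∀ k, ∫ y in Ioi (0:ℝ), ‖F k y‖ = w k * (1 / (2 * s * (k + 1))) := by
    intro k
    rw [← hFval k]
    refine setIntegral_congr_fun measurableSet_Ioi (fun y hy => ?_)
    exact Real.norm_of_nonneg (hFnn k y hy)
  have hsum_exp : Summable (fun k : ℕ => (l/2) ^ k / (Nat.factorial k : ℝ)) :=
    Real.summable_pow_div_factorial (l/2)
  have hSummable : Summable fun k => ∫ y in Ioi (0:ℝ), ‖F k y‖ := by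
    simp_rw [hnormval]
    refine Summable.of_nonneg_of_le (fun k => ?_) (fun k => ?_)
      ((hsum_exp.mul_left (Real.exp (-l/2) * (1/(2*s)))))
    · have := hw0 k; positivity
    · have hk : (1:ℝ) / (2 * s * (k + 1)) ≤ 1 / (2 * s) := by
        apply div_le_div_of_nonneg_left one_pos.le (by positivity)
        nlinarith [Nat.cast_nonneg (α := ℝ) k]
      calc w k * (1 / (2 * s * (k + 1)))
          ≤ w k * (1 / (2 * s)) := by
            exact mul_le_mul_of_nonneg_left hk (hw0 k)
        _ = Real.exp (-l/2) * (1/(2*s)) * ((l/2)^k / (Nat.factorial k : ℝ)) := by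
            simp only [hw]; ring
  rw [step1, ← integral_tsum_of_summable_integral_norm hFint hSummable]
  simp_rw [hFval]
  have key : ∀ k : ℕ, w k * (1 / (2 * s * (k + 1)))
      = (Real.exp (-l/2) / x) * ((l/2)^(k+1) / (Nat.factorial (k+1) : ℝ)) := by
    intro k
    have hfac : (0:ℝ) < (Nat.factorial k : ℝ) := by exact_mod_cast Nat.factorial_pos k
    have hk1 : (0:ℝ) < (k:ℝ) + 1 := by positivity
    simp only [hw, Nat.factorial_succ, pow_succ]
    push_cast
    rw [hl]
    field_simp
  simp_rw [key]
  rw [tsum_mul_left]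
  have hshift : ∑' k : ℕ, ((l/2)^(k+1) / (Nat.factorial (k+1) : ℝ))
      = Real.exp (l/2) - 1 := by
    have hexp : Real.exp (l/2) = ∑' n : ℕ, (l/2)^n / (Nat.factorial n : ℝ) := by
      rw [Real.exp_eq_exp_ℝ, NormedSpace.exp_eq_tsum_div]
    rw [hexp, Summable.tsum_eq_zero_add hsum_exp]
    simp
  rw [hshift]
  have : Real.exp (-l/2) * Real.exp (l/2) = 1 := by
    rw [← Real.exp_add, show -l/2 + l/2 = 0 by ring, Real.exp_zero]
  have harg : -x / (2 * s) = -l / 2 := by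
    rw [hl]; ring
  rw [harg]
  field_simp
  rw [neg_div] at this
  nlinarith [this]
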